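/- Let (μ_t)_{t≥0} be a unit-speed ray in P_p(X) and suppose (ν_t)_{t≥0} is a co-ray to (μ_t). Then the Busemann function b_μ decreases linearly along the co-ray: b_μ(ν_{t₁}) − b_μ(ν_{t₂}) = t₂ − t₁ for all t₁, t₂ ≥ 0. -/

import Mathlib

open MeasureTheory Filter Topology Metric Set
open scoped NNReal ENNReal

noncomputable section

variable {X : Type*} [MetricSpace X] [MeasurableSpace X] [BorelSpace X]

/-- `π` is a coupling of `μ` and `ν`: its marginals are `μ` and `ν`. -/
def IsCoupling (π : Measure (X × X)) (μ ν : Measure X) : Prop :=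
  π.map Prod.fst = μ ∧ π.map Prod.snd = ν

/-- The `p`-transport cost of a plan `π`. -/
def transportCost (p : ℝ) (π : Measure (X × X)) : ℝ≥0∞ :=
  ∫⁻ z, ENNReal.ofReal (dist z.1 z.2 ^ p) ∂π

/-- The `p`-Wasserstein distance, valued in `ℝ≥0∞`. -/
def WpE (p : ℝ) (μ ν : Measure X) : ℝ≥0∞ :=
  (⨅ π : {π : Measure (X × X) // IsCoupling π μ ν ∧ IsProbabilityMeasure π},
    transportCost p π.1) ^ (1 / p)

/-- The `p`-Wasserstein distance, as a real number. -/
def Wp (p : ℝ) (μ ν : Measure X) : ℝ := (WpE p μ ν).toReal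

/-- `π` is an optimal coupling of `(μ, ν)` for the `p`-Wasserstein cost. -/
def IsOptimalCoupling (p : ℝ) (π : Measure (X × X)) (μ ν : Measure X) : Prop :=
  IsCoupling π μ ν ∧ IsProbabilityMeasure π ∧
    transportCost p π =
      ⨅ π' : {π' : Measure (X × X) // IsCoupling π' μ ν ∧ IsProbabilityMeasure π'},
        transportCost p π'.1

/-- membership in the Wasserstein space `P_p(X)`: a Borel probability measure
with finite `p`-th moment. -/
def HasFiniteMomentP (p : ℝ) (μ : Measure X) : Prop :=
  IsProbabilityMeasure μ ∧ ∃ x0 : X, ∫⁻ x, ENNReal.ofReal (dist x0 x ^ p) ∂μ < ⊤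

/-- A unit-speed ray in the Wasserstein space `P_p(X)`, parametrized by `t ≥ 0`. -/
def IsUnitRayW (p : ℝ) (μ : ℝ → Measure X) : Prop :=
  (∀ t, 0 ≤ t → HasFiniteMomentP p (μ t)) ∧
    ∀ s t, 0 ≤ s → 0 ≤ t → Wp p (μ s) (μ t) = |s - t|

/-- A unit-speed geodesic `(ν_t)_{0 ≤ t ≤ L}` in the Wasserstein space `P_p(X)`. -/
def IsUnitGeodesicW (p : ℝ) (ν : ℝ → Measure X) (L : ℝ) : Prop :=
  (∀ t ∈ Icc (0:ℝ) L, HasFiniteMomentP p (ν t)) ∧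
    ∀ s t, s ∈ Icc (0:ℝ) L → t ∈ Icc (0:ℝ) L → Wp p (ν s) (ν t) = |s - t|

/-- `(ν_t)_{t ≥ 0}` is a co-ray from `ν 0` to the unit-speed ray `(μ_t)_{t ≥ 0}`:
it is a unit-speed ray which is the pointwise `W_p`-limit of unit-speed geodesics
from `ν₀ⁿ → ν 0` to `μ_{t_n}`, `t_n → ∞`. -/
def IsCoRay (p : ℝ) (μ ν : ℝ → Measure X) : Prop :=
  IsUnitRayW p ν ∧
  ∃ (tn : ℕ → ℝ) (ν0n : ℕ → Measure X) (νn : ℕ → ℝ → Measure X),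
    Tendsto tn atTop atTop ∧
    (∀ n, HasFiniteMomentP p (ν0n n)) ∧
    Tendsto (fun n => Wp p (ν0n n) (ν 0)) atTop (𝓝 0) ∧
    (∀ n, νn n 0 = ν0n n ∧ νn n (Wp p (ν0n n) (μ (tn n))) = μ (tn n) ∧
      IsUnitGeodesicW p (νn n) (Wp p (ν0n n) (μ (tn n)))) ∧
    ∀ t, 0 ≤ t → Tendsto (fun n => Wp p (νn n t) (ν t)) atTop (𝓝 0)

/-- Busemann function of the ray `(μ_t)_{t ≥ 0}` in `P_p(X)`. -/
def busemann (p : ℝ) (μ : ℝ → Measure X) (ν : Measure X) : ℝ :=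
  limUnder atTop fun t : ℝ => Wp p ν (μ t) - t

/-- Length space, via the approximate-midpoint characterization
(equivalent to the usual definition for complete spaces). -/
def IsLengthSpace (Y : Type*) [MetricSpace Y] : Prop :=
  ∀ x y : Y, ∀ ε > (0:ℝ), ∃ z : Y,
    dist x z ≤ dist x y / 2 + ε ∧ dist z y ≤ dist x y / 2 + ε

/-- Non-branching: any constant-speed geodesic segment is determined by
its restriction to a nontrivial time-interval. -/
def IsNonBranching (Y : Type*) [MetricSpace Y] : Prop :=
  ∀ (a b : ℝ) (γ₁ γ₂ : ℝ → Y), a < b →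
    (∀ s t, s ∈ Icc a b → t ∈ Icc a b →
      (b - a) * dist (γ₁ s) (γ₁ t) = |s - t| * dist (γ₁ a) (γ₁ b)) →
    (∀ s t, s ∈ Icc a b → t ∈ Icc a b →
      (b - a) * dist (γ₂ s) (γ₂ t) = |s - t| * dist (γ₂ a) (γ₂ b)) →
    (∃ c d, a ≤ c ∧ c < d ∧ d ≤ b ∧ ∀ t ∈ Icc c d, γ₁ t = γ₂ t) →
    ∀ t ∈ Icc a b, γ₁ t = γ₂ t

end


/-! ### Auxiliary lemmas -/

open ProbabilityTheory

set_option linter.unusedSectionVars false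
set_option maxHeartbeats 1000000

noncomputable section AuxWp
variable {X : Type*} [MetricSpace X] [MeasurableSpace X] [BorelSpace X]
  [SecondCountableTopology X]

lemma meas_integrand (p : ℝ) : Measurable fun z : X × X => ENNReal.ofReal (dist z.1 z.2 ^ p) :=
  ENNReal.measurable_ofReal.comp (measurable_dist.pow_const p)

lemma meas_eintegrand (p : ℝ) : Measurable fun z : X × X => (edist z.1 z.2) ^ p :=
  measurable_edist.pow_const p

lemma cost_eq_edist (p : ℝ) (hp : 0 ≤ p) (π : Measure (X × X)) :
    transportCost p π = ∫⁻ z, (edist z.1 z.2) ^ p ∂π := by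
  unfold transportCost
  congr 1; ext z
  rw [edist_dist, ← ENNReal.ofReal_rpow_of_nonneg dist_nonneg hp]

lemma isCoupling_prod (μ ν : Measure X) [IsProbabilityMeasure μ] [IsProbabilityMeasure ν] :
    IsCoupling (μ.prod ν) μ ν :=
  ⟨Measure.fst_prod, Measure.snd_prod⟩

instance nonempty_couplings (μ ν : Measure X) [IsProbabilityMeasure μ] [IsProbabilityMeasure ν] :
    Nonempty {π : Measure (X × X) // IsCoupling π μ ν ∧ IsProbabilityMeasure π} :=
  ⟨⟨μ.prod ν, isCoupling_prod μ ν, inferInstance⟩⟩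

lemma WpE_le_cost {p : ℝ} (hp : 0 ≤ p) {π : Measure (X × X)} {μ ν : Measure X}
    (h : IsCoupling π μ ν) (h2 : IsProbabilityMeasure π) :
    WpE p μ ν ≤ (transportCost p π) ^ (1 / p) :=
  ENNReal.rpow_le_rpow (iInf_le (fun π' : {π' : Measure (X × X) // IsCoupling π' μ ν ∧ IsProbabilityMeasure π'} =>
    transportCost p π'.1) ⟨π, h, h2⟩) (by positivity)

lemma isCoupling_swap {π : Measure (X × X)} {μ ν : Measure X} (h : IsCoupling π μ ν) :
    IsCoupling (π.map Prod.swap) ν μ := by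
  constructor
  · rw [Measure.map_map measurable_fst measurable_swap]
    exact h.2
  · rw [Measure.map_map measurable_snd measurable_swap]
    exact h.1

lemma cost_swap (p : ℝ) (π : Measure (X × X)) :
    transportCost p (π.map Prod.swap) = transportCost p π := by
  unfold transportCost
  rw [lintegral_map (meas_integrand p) measurable_swap]
  simp [dist_comm]

lemma WpE_symm (p : ℝ) (hp : 0 ≤ p) (μ ν : Measure X) : WpE p μ ν = WpE p ν μ := by
  unfold WpE
  congr 1
  apply le_antisymm
  · refine le_iInf fun π => ?_
    rw [← cost_swap p π.1]
    exact iInf_le (fun π' : {π' : Measure (X × X) // IsCoupling π' μ ν ∧ IsProbabilityMeasure π'} =>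
      transportCost p π'.1) ⟨π.1.map Prod.swap, isCoupling_swap π.2.1,
      haveI := π.2.2; Measure.isProbabilityMeasure_map measurable_swap.aemeasurable⟩
  · refine le_iInf fun π => ?_
    rw [← cost_swap p π.1]
    exact iInf_le (fun π' : {π' : Measure (X × X) // IsCoupling π' ν μ ∧ IsProbabilityMeasure π'} =>
      transportCost p π'.1) ⟨π.1.map Prod.swap, isCoupling_swap π.2.1,
      haveI := π.2.2; Measure.isProbabilityMeasure_map measurable_swap.aemeasurable⟩

section glue
variable [StandardBorelSpace X] [Nonempty X]

lemma map_compProd_fst (ρ : Measure X) [IsProbabilityMeasure ρ] (κ₁ κ₂ : Kernel X X)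
    [IsMarkovKernel κ₁] [IsMarkovKernel κ₂] :
    (ρ ⊗ₘ (κ₁ ×ₖ κ₂)).map (fun w : X × X × X => (w.1, w.2.1)) = ρ ⊗ₘ κ₁ := by
  have hg : Measurable fun w : X × X × X => (w.1, w.2.1) :=
    measurable_fst.prodMk (measurable_fst.comp measurable_snd)
  ext s hs
  rw [Measure.map_apply hg hs, Measure.compProd_apply (hg hs), Measure.compProd_apply hs]
  congr 1
  ext a
  have : (Prod.mk a ⁻¹' ((fun w : X × X × X => (w.1, w.2.1)) ⁻¹' s))
      = {q : X × X | q.1 ∈ Prod.mk a ⁻¹' s} := rfl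
  rw [this, ← Kernel.fst_apply' _ _ (measurable_prodMk_left hs), Kernel.fst_prod]

lemma map_compProd_snd (ρ : Measure X) [IsProbabilityMeasure ρ] (κ₁ κ₂ : Kernel X X)
    [IsMarkovKernel κ₁] [IsMarkovKernel κ₂] :
    (ρ ⊗ₘ (κ₁ ×ₖ κ₂)).map (fun w : X × X × X => (w.1, w.2.2)) = ρ ⊗ₘ κ₂ := by
  have hg : Measurable fun w : X × X × X => (w.1, w.2.2) :=
    measurable_fst.prodMk (measurable_snd.comp measurable_snd)
  ext s hs
  rw [Measure.map_apply hg hs, Measure.compProd_apply (hg hs), Measure.compProd_apply hs]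
  congr 1
  ext a
  have : (Prod.mk a ⁻¹' ((fun w : X × X × X => (w.1, w.2.2)) ⁻¹' s))
      = Prod.snd ⁻¹' (Prod.mk a ⁻¹' s) := rfl
  rw [this, ← Kernel.snd_apply' _ _ (measurable_prodMk_left hs), Kernel.snd_prod]

lemma triangle_aux {p : ℝ} (hp : 1 ≤ p) {μ ρ ν : Measure X}
    (π₁ π₂ : Measure (X × X)) (h₁ : IsCoupling π₁ μ ρ) (h₂ : IsCoupling π₂ ρ ν)
    [IsProbabilityMeasure π₁] [IsProbabilityMeasure π₂] :
    ∃ π : Measure (X × X), IsCoupling π μ ν ∧ IsProbabilityMeasure π ∧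
      (transportCost p π) ^ (1 / p) ≤
        (transportCost p π₁) ^ (1 / p) + (transportCost p π₂) ^ (1 / p) := by
  have hp0 : (0:ℝ) ≤ p := le_trans zero_le_one hp
  set π₁' : Measure (X × X) := π₁.map Prod.swap with hπ₁'
  haveI : IsProbabilityMeasure π₁' := Measure.isProbabilityMeasure_map measurable_swap.aemeasurable
  haveI : IsProbabilityMeasure ρ := h₂.1 ▸ Measure.isProbabilityMeasure_map measurable_fst.aemeasurable
  have hfst1 : π₁'.fst = ρ := by
    rw [hπ₁', Measure.fst_map_swap]
    exact h₁.2
  have hfst2 : π₂.fst = ρ := h₂.1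
  set κ₁ := π₁'.condKernel with hκ₁
  set κ₂ := π₂.condKernel with hκ₂
  have hd1 : ρ ⊗ₘ κ₁ = π₁' := by rw [← hfst1]; exact π₁'.disintegrate _
  have hd2 : ρ ⊗ₘ κ₂ = π₂ := by rw [← hfst2]; exact π₂.disintegrate _
  set σ : Measure (X × X × X) := ρ ⊗ₘ (κ₁ ×ₖ κ₂) with hσ
  have hσ1 : σ.map (fun w : X × X × X => (w.1, w.2.1)) = π₁' := by
    rw [hσ, map_compProd_fst, hd1]
  have hσ2 : σ.map (fun w : X × X × X => (w.1, w.2.2)) = π₂ := by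
    rw [hσ, map_compProd_snd, hd2]
  have hg1 : Measurable fun w : X × X × X => (w.1, w.2.1) :=
    measurable_fst.prodMk (measurable_fst.comp measurable_snd)
  have hg2 : Measurable fun w : X × X × X => (w.1, w.2.2) :=
    measurable_fst.prodMk (measurable_snd.comp measurable_snd)
  haveI : IsProbabilityMeasure σ := by rw [hσ]; infer_instance
  refine ⟨σ.map Prod.snd, ⟨?_, ?_⟩, Measure.isProbabilityMeasure_map measurable_snd.aemeasurable, ?_⟩
  · rw [Measure.map_map measurable_fst measurable_snd]
    have : (Prod.fst ∘ Prod.snd : X × X × X → X)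
        = Prod.snd ∘ (fun w : X × X × X => (w.1, w.2.1)) := rfl
    rw [this, ← Measure.map_map measurable_snd hg1, hσ1, hπ₁',
      Measure.map_map measurable_snd measurable_swap]
    exact h₁.1
  · rw [Measure.map_map measurable_snd measurable_snd]
    have : (Prod.snd ∘ Prod.snd : X × X × X → X)
        = Prod.snd ∘ (fun w : X × X × X => (w.1, w.2.2)) := rfl
    rw [this, ← Measure.map_map measurable_snd hg2, hσ2]
    exact h₂.2
  · have hc : transportCost p (σ.map Prod.snd)
        = ∫⁻ w, (edist w.2.1 w.2.2) ^ p ∂σ := by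
      rw [cost_eq_edist p hp0, lintegral_map (meas_eintegrand p) measurable_snd]
    have hmono : ∫⁻ w, (edist w.2.1 w.2.2) ^ p ∂σ
        ≤ ∫⁻ w, (edist w.2.1 w.1 + edist w.1 w.2.2) ^ p ∂σ := by
      refine lintegral_mono fun w => ?_
      exact ENNReal.rpow_le_rpow (edist_triangle _ _ _) hp0
    have hF : AEMeasurable (fun w : X × X × X => edist w.2.1 w.1) σ :=
      (measurable_edist.comp ((measurable_fst.comp measurable_snd).prodMk
        measurable_fst)).aemeasurable
    have hG : AEMeasurable (fun w : X × X × X => edist w.1 w.2.2) σ :=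
      (measurable_edist.comp (measurable_fst.prodMk
        (measurable_snd.comp measurable_snd))).aemeasurable
    have hLp := ENNReal.lintegral_Lp_add_le hF hG hp
    have hF2 : ∫⁻ w, (edist w.2.1 w.1) ^ p ∂σ = transportCost p π₁ := by
      rw [← cost_swap p π₁, ← hπ₁', ← hσ1, cost_eq_edist p hp0,
        lintegral_map (meas_eintegrand p) hg1]
      congr 1; ext w
      rw [edist_comm]
    have hG2 : ∫⁻ w, (edist w.1 w.2.2) ^ p ∂σ = transportCost p π₂ := by
      rw [← hσ2, cost_eq_edist p hp0, lintegral_map (meas_eintegrand p) hg2]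
    calc (transportCost p (σ.map Prod.snd)) ^ (1 / p)
        ≤ (∫⁻ w, (edist w.2.1 w.1 + edist w.1 w.2.2) ^ p ∂σ) ^ (1 / p) := by
          rw [hc]; exact ENNReal.rpow_le_rpow hmono (by positivity)
      _ ≤ (∫⁻ w, (edist w.2.1 w.1) ^ p ∂σ) ^ (1 / p)
            + (∫⁻ w, (edist w.1 w.2.2) ^ p ∂σ) ^ (1 / p) := hLp
      _ = _ := by rw [hF2, hG2]

lemma WpE_triangle {p : ℝ} (hp : 1 ≤ p) (μ ρ ν : Measure X)
    [IsProbabilityMeasure μ] [IsProbabilityMeasure ρ] [IsProbabilityMeasure ν] :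
    WpE p μ ν ≤ WpE p μ ρ + WpE p ρ ν := by
  have hp0 : (0:ℝ) < p := lt_of_lt_of_le zero_lt_one hp
  have hrw : ∀ (a b : Measure X) (_ : IsProbabilityMeasure a) (_ : IsProbabilityMeasure b),
      WpE p a b = ⨅ π : {π : Measure (X × X) // IsCoupling π a b ∧ IsProbabilityMeasure π},
        (transportCost p π.1) ^ (1 / p) := by
    intro a b ha hb
    unfold WpE
    exact ((ENNReal.orderIsoRpow (1/p) (by positivity)).map_iInf _)
  rw [hrw μ ρ inferInstance inferInstance, hrw ρ ν inferInstance inferInstance,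
    ENNReal.iInf_add]
  refine le_iInf fun π₁ => ?_
  rw [ENNReal.add_iInf]
  refine le_iInf fun π₂ => ?_
  haveI := π₁.2.2; haveI := π₂.2.2
  obtain ⟨π, hc, hprob, hle⟩ := triangle_aux hp π₁.1 π₂.1 π₁.2.1 π₂.2.1
  exact le_trans (WpE_le_cost (le_of_lt hp0) hc hprob) hle

lemma WpE_dirac_le {p : ℝ} (hp : 0 < p) (μ : Measure X) [IsProbabilityMeasure μ] (x0 : X) :
    WpE p μ (Measure.dirac x0) ≤ (∫⁻ x, ENNReal.ofReal (dist x x0 ^ p) ∂μ) ^ (1/p) := by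
  have hcoup : IsCoupling (μ.prod (Measure.dirac x0)) μ (Measure.dirac x0) :=
    isCoupling_prod _ _
  refine le_trans (WpE_le_cost (le_of_lt hp) hcoup inferInstance) ?_
  refine ENNReal.rpow_le_rpow ?_ (by positivity)
  unfold transportCost
  rw [lintegral_prod _ (meas_integrand p).aemeasurable]
  simp [lintegral_dirac]

lemma WpE_lt_top {p : ℝ} (hp : 1 ≤ p) {μ ν : Measure X}
    (hμ : HasFiniteMomentP p μ) (hν : HasFiniteMomentP p ν) :
    WpE p μ ν < ⊤ := by
  have hp0 : (0:ℝ) < p := lt_of_lt_of_le zero_lt_one hp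
  haveI := hμ.1; haveI := hν.1
  obtain ⟨x0, hx0⟩ := hμ.2
  obtain ⟨x1, hx1⟩ := hν.2
  have h1 : WpE p μ (Measure.dirac x0) < ⊤ := by
    refine lt_of_le_of_lt (WpE_dirac_le hp0 μ x0) ?_
    refine ENNReal.rpow_lt_top_of_nonneg (by positivity) ?_
    simp_rw [dist_comm]
    exact hx0.ne
  have h2 : WpE p ν (Measure.dirac x1) < ⊤ := by
    refine lt_of_le_of_lt (WpE_dirac_le hp0 ν x1) ?_
    refine ENNReal.rpow_lt_top_of_nonneg (by positivity) ?_
    simp_rw [dist_comm]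
    exact hx1.ne
  have h3 : WpE p (Measure.dirac x0) (Measure.dirac x1) < ⊤ := by
    have hcoup : IsCoupling ((Measure.dirac x0).prod (Measure.dirac x1))
        (Measure.dirac x0) (Measure.dirac x1) := isCoupling_prod _ _
    refine lt_of_le_of_lt (WpE_le_cost (le_of_lt hp0) hcoup inferInstance) ?_
    refine ENNReal.rpow_lt_top_of_nonneg (by positivity) ?_
    unfold transportCost
    rw [lintegral_prod _ (meas_integrand p).aemeasurable]
    simp [lintegral_dirac]
  have hsymm : WpE p (Measure.dirac x1) ν = WpE p ν (Measure.dirac x1) :=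
    WpE_symm p (le_of_lt hp0) _ _
  calc WpE p μ ν ≤ WpE p μ (Measure.dirac x0) + WpE p (Measure.dirac x0) ν :=
        WpE_triangle hp μ (Measure.dirac x0) ν
    _ ≤ WpE p μ (Measure.dirac x0) + (WpE p (Measure.dirac x0) (Measure.dirac x1)
          + WpE p (Measure.dirac x1) ν) := by
        gcongr
        exact WpE_triangle hp _ (Measure.dirac x1) ν
    _ < ⊤ := by
        rw [hsymm]
        exact ENNReal.add_lt_top.2 ⟨h1, ENNReal.add_lt_top.2 ⟨h3, h2⟩⟩

lemma Wp_symm' (p : ℝ) (hp : 0 ≤ p) (μ ν : Measure X) : Wp p μ ν = Wp p ν μ := by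
  unfold Wp; rw [WpE_symm p hp]

lemma Wp_triangle' {p : ℝ} (hp : 1 ≤ p) {μ ρ ν : Measure X}
    (hμ : HasFiniteMomentP p μ) (hρ : HasFiniteMomentP p ρ) (hν : HasFiniteMomentP p ν) :
    Wp p μ ν ≤ Wp p μ ρ + Wp p ρ ν := by
  haveI := hμ.1; haveI := hρ.1; haveI := hν.1
  have h1 := WpE_lt_top hp hμ hρ
  have h2 := WpE_lt_top hp hρ hν
  have h := WpE_triangle (X := X) hp μ ρ ν
  unfold Wp
  rw [← ENNReal.toReal_add h1.ne h2.ne]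
  exact ENNReal.toReal_mono (ENNReal.add_lt_top.2 ⟨h1, h2⟩).ne h

lemma busemann_exists {p : ℝ} (hp : 1 ≤ p) {μ : ℝ → Measure X} (hμ : IsUnitRayW p μ)
    {ν' : Measure X} (hν' : HasFiniteMomentP p ν') :
    ∃ b : ℝ, Tendsto (fun t => Wp p ν' (μ t) - t) atTop (𝓝 b) := by
  set g : ℝ → ℝ := fun t => Wp p ν' (μ (max t 0)) - max t 0 with hg
  have key : ∀ s t : ℝ, 0 ≤ s → s ≤ t →
      Wp p ν' (μ t) - t ≤ Wp p ν' (μ s) - s := by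
    intro s t h0s hst
    have h0t : 0 ≤ t := le_trans h0s hst
    have htri := Wp_triangle' hp hν' (hμ.1 s h0s) (hμ.1 t h0t)
    have heq : Wp p (μ s) (μ t) = t - s := by
      rw [hμ.2 s t h0s h0t, abs_of_nonpos (by linarith)]
      ring
    linarith
  have hanti : Antitone g := by
    intro s t hst
    exact key (max s 0) (max t 0) (le_max_right _ _) (max_le_max hst le_rfl)
  have hlb : ∀ t : ℝ, -(Wp p (μ 0) ν') ≤ g t := by
    intro t
    set t' := max t 0
    have h0t : 0 ≤ t' := le_max_right _ _
    have htri := Wp_triangle' hp (hμ.1 0 le_rfl) hν' (hμ.1 t' h0t)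
    have heq : Wp p (μ 0) (μ t') = t' := by
      rw [hμ.2 0 t' le_rfl h0t, abs_of_nonpos (by linarith)]; ring
    simp only [hg]
    linarith
  have hbdd : BddBelow (range g) := ⟨-(Wp p (μ 0) ν'), by rintro x ⟨t, rfl⟩; exact hlb t⟩
  refine ⟨⨅ t, g t, (tendsto_atTop_ciInf hanti hbdd).congr' ?_⟩
  filter_upwards [eventually_ge_atTop (0:ℝ)] with t ht
  simp only [hg, max_eq_left ht]

lemma busemann_key {p : ℝ} (hp : 1 ≤ p) {μ ν : ℝ → Measure X}
    (hμ : IsUnitRayW p μ) (hco : IsCoRay p μ ν)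
    {t₁ t₂ : ℝ} (h₁ : 0 ≤ t₁) (h₂ : 0 ≤ t₂) (h12 : t₁ ≤ t₂)
    {b₁ b₂ : ℝ}
    (hb₁ : Tendsto (fun t => Wp p (ν t₁) (μ t) - t) atTop (𝓝 b₁))
    (hb₂ : Tendsto (fun t => Wp p (ν t₂) (μ t) - t) atTop (𝓝 b₂)) :
    b₁ - b₂ = t₂ - t₁ := by
  have hp0 : (0:ℝ) ≤ p := le_trans zero_le_one hp
  obtain ⟨hν, tn, ν0n, νn, htn, hmom0, hν0, hgeo, hconv⟩ := hco
  have hνmom : ∀ t, 0 ≤ t → HasFiniteMomentP p (ν t) := hν.1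
  have hμmom : ∀ t, 0 ≤ t → HasFiniteMomentP p (μ t) := hμ.1
  have part1 : b₁ ≤ b₂ + (t₂ - t₁) := by
    have hev : ∀ᶠ t in (atTop : Filter ℝ),
        Wp p (ν t₁) (μ t) - t ≤ (t₂ - t₁) + (Wp p (ν t₂) (μ t) - t) := by
      filter_upwards [eventually_ge_atTop (0:ℝ)] with t ht
      have htri := Wp_triangle' hp (hνmom t₁ h₁) (hνmom t₂ h₂) (hμmom t ht)
      have heq : Wp p (ν t₁) (ν t₂) = t₂ - t₁ := by
        rw [hν.2 t₁ t₂ h₁ h₂, abs_of_nonpos (by linarith)]; ring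
      linarith
    have h2' : Tendsto (fun t => (t₂ - t₁) + (Wp p (ν t₂) (μ t) - t)) atTop
        (𝓝 ((t₂ - t₁) + b₂)) := (tendsto_const_nhds.add hb₂)
    have := le_of_tendsto_of_tendsto hb₁ h2' hev
    linarith
  have part2 : b₂ ≤ b₁ - (t₂ - t₁) := by
    set L : ℕ → ℝ := fun n => Wp p (ν0n n) (μ (tn n)) with hL
    set C : ℝ := Wp p (μ 0) (ν 0) with hC
    have hev : ∀ᶠ n in atTop,
        Wp p (ν t₂) (μ (tn n)) - tn n ≤
          Wp p (νn n t₂) (ν t₂) + Wp p (νn n t₁) (ν t₁)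
            + (Wp p (ν t₁) (μ (tn n)) - tn n) - (t₂ - t₁) := by
      filter_upwards [htn.eventually_ge_atTop 0,
        htn.eventually_ge_atTop (t₂ + C + 1),
        hν0.eventually (gt_mem_nhds (by norm_num : (0:ℝ) < 1))] with n htn0 htn2 hν01
      have hμ0tn : Wp p (μ 0) (μ (tn n)) = tn n := by
        rw [hμ.2 0 (tn n) le_rfl htn0, abs_of_nonpos (by linarith)]; ring
      have htri1 := Wp_triangle' hp (hμmom 0 le_rfl) (hmom0 n) (hμmom (tn n) htn0)
      have htri2 := Wp_triangle' hp (hμmom 0 le_rfl) (hνmom 0 le_rfl) (hmom0 n)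
      have hsy : Wp p (ν 0) (ν0n n) = Wp p (ν0n n) (ν 0) := Wp_symm' p hp0 _ _
      have hLn : t₂ ≤ L n := by
        simp only [hL]
        rw [← hC] at htri2
        linarith
      have hLn0 : (0:ℝ) ≤ L n := le_trans h₂ hLn
      obtain ⟨he0, heL, hgeon⟩ := hgeo n
      have ht₁m : t₁ ∈ Icc (0:ℝ) (L n) := ⟨h₁, le_trans h12 hLn⟩
      have ht₂m : t₂ ∈ Icc (0:ℝ) (L n) := ⟨h₂, hLn⟩
      have hLm : L n ∈ Icc (0:ℝ) (L n) := ⟨hLn0, le_rfl⟩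
      have hA : Wp p (νn n t₂) (μ (tn n)) = L n - t₂ := by
        have := hgeon.2 t₂ (L n) ht₂m hLm
        rw [heL] at this
        rw [this, abs_of_nonpos (by linarith)]; ring
      have hB : Wp p (νn n t₁) (μ (tn n)) = L n - t₁ := by
        have := hgeon.2 t₁ (L n) ht₁m hLm
        rw [heL] at this
        rw [this, abs_of_nonpos (by linarith [ht₁m.2])]; ring
      have hmomg := hgeon.1
      have htri3 := Wp_triangle' hp (hνmom t₂ h₂) (hmomg t₂ ht₂m)
        (hμmom (tn n) htn0)
      have htri4 := Wp_triangle' hp (hmomg t₁ ht₁m) (hνmom t₁ h₁)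
        (hμmom (tn n) htn0)
      have hsy2 : Wp p (ν t₂) (νn n t₂) = Wp p (νn n t₂) (ν t₂) := Wp_symm' p hp0 _ _
      rw [hA] at htri3
      rw [hB] at htri4
      linarith
    have hlhs : Tendsto (fun n => Wp p (ν t₂) (μ (tn n)) - tn n) atTop (𝓝 b₂) :=
      hb₂.comp htn
    have hrhs : Tendsto (fun n => Wp p (νn n t₂) (ν t₂) + Wp p (νn n t₁) (ν t₁)
        + (Wp p (ν t₁) (μ (tn n)) - tn n) - (t₂ - t₁)) atTop
        (𝓝 (0 + 0 + b₁ - (t₂ - t₁))) :=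
      (((hconv t₂ h₂).add (hconv t₁ h₁)).add (hb₁.comp htn)).sub tendsto_const_nhds
    have := le_of_tendsto_of_tendsto hlhs hrhs hev
    linarith
  linarith

end glue
end AuxWp

/-- the Busemann function of `(μ_t)` decreases linearly along any
co-ray `(ν_t)`: `b_μ(ν_{t₁}) - b_μ(ν_{t₂}) = t₂ - t₁`. -/
theorem stmt_5 {X : Type*} [MetricSpace X] [MeasurableSpace X] [BorelSpace X]
    [CompleteSpace X] [TopologicalSpace.SeparableSpace X]
    [LocallyCompactSpace X] [NoncompactSpace X] (hX : IsLengthSpace X)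
    {p : ℝ} (hp : 1 < p) (μ ν : ℝ → Measure X)
    (hμ : IsUnitRayW p μ) (hco : IsCoRay p μ ν)
    (t₁ t₂ : ℝ) (h₁ : 0 ≤ t₁) (h₂ : 0 ≤ t₂) :
    ∃ b₁ b₂ : ℝ,
      Tendsto (fun t => Wp p (ν t₁) (μ t) - t) atTop (𝓝 b₁) ∧
      Tendsto (fun t => Wp p (ν t₂) (μ t) - t) atTop (𝓝 b₂) ∧
      b₁ - b₂ = t₂ - t₁ := by
  haveI : Nonempty X := by
    by_contra h
    rw [not_nonempty_iff] at h
    exact NoncompactSpace.noncompact_univ (X := X) isCompact_univ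
  haveI : SecondCountableTopology X := UniformSpace.secondCountable_of_separable X
  have hp1 : 1 ≤ p := le_of_lt hp
  obtain ⟨b₁, hb₁⟩ := busemann_exists hp1 hμ (hco.1.1 t₁ h₁)
  obtain ⟨b₂, hb₂⟩ := busemann_exists hp1 hμ (hco.1.1 t₂ h₂)
  refine ⟨b₁, b₂, hb₁, hb₂, ?_⟩
  rcases le_total t₁ t₂ with h12 | h12
  · exact busemann_key hp1 hμ hco h₁ h₂ h12 hb₁ hb₂
  · have := busemann_key hp1 hμ hco h₂ h₁ h12 hb₂ hb₁
    linarith
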